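/- Let μ > 0 and suppose (μ·a₂' + a₂, μ·a₁' + a₁) ≠ (0, 0). Then the boundary value problem has a nontrivial solution — i.e. there exist twice continuously differentiable functions y₁ on [0, π/2] and y₂ on [π/2, π], not both identically zero, each satisfying the delay differential equation on its interval, together with the boundary condition (μ·a₁' + a₁)·y₁(0) − (μ·a₂' + a₂)·y₁'(0) = 0, the boundary condition cos(b)·y₂(π) + μ·sin(b)·y₂'(π) = 0, and the interface conditions y₁(π/2) = δ·y₂(π/2) and y₁'(π/2) = δ·y₂'(π/2) — if and only if F(μ) = 0, where F(μ) = cos(b)·ω₂(π, μ) + μ·sin(b)·ω₂'(π, μ). -/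

import Mathlib

open Real Set Filter


lemma bdd_left {a c L : ℝ} (hac : a < c) {q : ℝ → ℝ}
    (hq : ContinuousOn q (Ico a c))
    (hlim : Filter.Tendsto q (nhdsWithin c (Iio c)) (nhds L)) :
    ∃ Q, 0 ≤ Q ∧ ∀ t ∈ Ioo a c, |q t| ≤ Q := by
  rw [Metric.tendsto_nhdsWithin_nhds] at hlim
  obtain ⟨ε, hε, hball⟩ := hlim 1 one_pos
  set c' := max a (c - ε/2) with hc'
  have hc'lt : c' < c := max_lt hac (by linarith)
  have hsub : Icc a c' ⊆ Ico a c := fun t ht => ⟨ht.1, lt_of_le_of_lt ht.2 hc'lt⟩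
  obtain ⟨C, hC⟩ := isCompact_Icc.exists_bound_of_continuousOn (hq.mono hsub)
  refine ⟨max C (|L| + 1), le_trans (by positivity) (le_max_right _ _), ?_⟩
  intro t ht
  rcases le_or_gt t c' with h | h
  · exact le_trans (hC t ⟨ht.1.le, h⟩) (le_max_left _ _)
  · have h2 : dist t c < ε := by
      rw [Real.dist_eq, abs_of_nonpos (by linarith [ht.2.le])]
      have : c - ε/2 ≤ c' := le_max_right _ _
      linarith
    have h3 := hball ht.2 h2
    rw [Real.dist_eq] at h3
    have : |q t| ≤ |L| + 1 := by
      have := abs_sub_abs_le_abs_sub (q t) L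
      linarith
    exact le_trans this (le_max_right _ _)

lemma bdd_right {a c L : ℝ} (hac : a < c) {q : ℝ → ℝ}
    (hq : ContinuousOn q (Ioc a c))
    (hlim : Filter.Tendsto q (nhdsWithin a (Ioi a)) (nhds L)) :
    ∃ Q, 0 ≤ Q ∧ ∀ t ∈ Ioo a c, |q t| ≤ Q := by
  rw [Metric.tendsto_nhdsWithin_nhds] at hlim
  obtain ⟨ε, hε, hball⟩ := hlim 1 one_pos
  set c' := min c (a + ε/2) with hc'
  have hc'lt : a < c' := lt_min hac (by linarith)
  have hsub : Icc c' c ⊆ Ioc a c := fun t ht => ⟨lt_of_lt_of_le hc'lt ht.1, ht.2⟩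
  obtain ⟨C, hC⟩ := isCompact_Icc.exists_bound_of_continuousOn (hq.mono hsub)
  refine ⟨max C (|L| + 1), le_trans (by positivity) (le_max_right _ _), ?_⟩
  intro t ht
  rcases le_or_gt c' t with h | h
  · exact le_trans (hC t ⟨h, ht.2.le⟩) (le_max_left _ _)
  · have h2 : dist t a < ε := by
      rw [Real.dist_eq, abs_of_nonneg (by linarith [ht.1.le])]
      have : c' ≤ a + ε/2 := min_le_right _ _
      linarith
    have h3 := hball ht.1 h2
    rw [Real.dist_eq] at h3
    have : |q t| ≤ |L| + 1 := by
      have := abs_sub_abs_le_abs_sub (q t) L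
      linarith
    exact le_trans this (le_max_right _ _)


lemma uniq_zero {a c Q μsq : ℝ} (hac : a < c) (hQ : 0 ≤ Q) (hμ : 0 ≤ μsq)
    {q Δ u ud udd : ℝ → ℝ}
    (hqb : ∀ t ∈ Ioo a c, |q t| ≤ Q)
    (hd1 : ∀ x ∈ Icc a c, HasDerivWithinAt u (ud x) (Icc a c) x)
    (hd2 : ∀ x ∈ Icc a c, HasDerivWithinAt ud (udd x) (Icc a c) x)
    (hcu : ContinuousOn udd (Icc a c))
    (hret : ∀ t ∈ Ioo a c, a ≤ t - Δ t ∧ t - Δ t ≤ t)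
    (hode : ∀ t ∈ Ioo a c, udd t = -(q t * u (t - Δ t)) - μsq * u t)
    (hu0 : u a = 0) (hud0 : ud a = 0) :
    ∀ x ∈ Icc a c, u x = 0 ∧ ud x = 0 := by
  obtain ⟨K, hKdef⟩ : ∃ K : ℝ, K = 1 + Q + μsq := ⟨_, rfl⟩
  have hK : 0 < K := by rw [hKdef]; positivity
  obtain ⟨h, hhdef⟩ : ∃ h : ℝ, h = 1 / (2 * K) := ⟨_, rfl⟩
  have hh : 0 < h := by rw [hhdef]; positivity
  have hhK : h * K = 1 / 2 := by rw [hhdef]; field_simp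
  have hcu1 : ContinuousOn u (Icc a c) := fun x hx => (hd1 x hx).continuousWithinAt
  have hcu2 : ContinuousOn ud (Icc a c) := fun x hx => (hd2 x hx).continuousWithinAt
  -- the one-step propagation
  have step : ∀ s ∈ Ico a c, (∀ t ∈ Icc a s, u t = 0 ∧ ud t = 0) →
      ∀ t ∈ Icc a (min (s + h) c), u t = 0 ∧ ud t = 0 := by
    intro s hs hz
    obtain ⟨m, hm⟩ : ∃ m : ℝ, m = min (s + h) c := ⟨_, rfl⟩
    rw [← hm]
    have hsm : s < m := by rw [hm]; exact lt_min (by linarith) hs.2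
    have hmc : m ≤ c := by rw [hm]; exact min_le_right _ _
    have hms : m ≤ s + h := by rw [hm]; exact min_le_left _ _
    have hsub : Icc s m ⊆ Icc a c := Icc_subset_Icc hs.1 hmc
    have hgc : ContinuousOn (fun t => |u t| + |ud t|) (Icc s m) :=
      ((hcu1.mono hsub).abs.add (hcu2.mono hsub).abs)
    obtain ⟨w, hws, hmax⟩ := isCompact_Icc.exists_isMaxOn (nonempty_Icc.2 hsm.le) hgc
    obtain ⟨B, hBdef⟩ : ∃ B : ℝ, B = |u w| + |ud w| := ⟨_, rfl⟩
    have hB0 : 0 ≤ B := by rw [hBdef]; positivity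
    have hgle : ∀ t ∈ Icc s m, |u t| + |ud t| ≤ B := by
      intro t ht; rw [hBdef]; exact hmax ht
    have huB : ∀ t ∈ Icc s m, |u t| ≤ B := by
      intro t ht
      have h2 : (0:ℝ) ≤ |ud t| := abs_nonneg _
      have := hgle t ht; linarith
    have hudB : ∀ t ∈ Icc s m, |ud t| ≤ B := by
      intro t ht
      have h2 : (0:ℝ) ≤ |u t| := abs_nonneg _
      have := hgle t ht; linarith
    have hBzero : B = 0 := by
      rcases eq_or_lt_of_le hws.1 with hsw | hsw
      · have hz0 := hz s ⟨hs.1, le_refl s⟩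
        rw [hBdef, ← hsw, hz0.1, hz0.2]; simp
      · have hwc : w ≤ c := le_trans hws.2 hmc
        obtain ⟨C, hCdef⟩ : ∃ C : ℝ, C = (Q + μsq) * B := ⟨_, rfl⟩
        have hC0 : 0 ≤ C := by rw [hCdef]; positivity
        have hio : ∀ t ∈ Ioo s w, |udd t| ≤ C := by
          intro t ht
          have htac : t ∈ Ioo a c :=
            ⟨lt_of_le_of_lt hs.1 ht.1, lt_of_lt_of_le ht.2 hwc⟩
          have hodet := hode t htac
          have hretb := hret t htac
          have htm : t ∈ Icc s m := ⟨ht.1.le, le_trans ht.2.le hws.2⟩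
          have hur : |u (t - Δ t)| ≤ B := by
            rcases le_or_gt (t - Δ t) s with h' | h'
            · rw [(hz _ ⟨hretb.1, h'⟩).1, abs_zero]; exact hB0
            · exact huB _ ⟨h'.le, le_trans hretb.2 htm.2⟩
          have hut : |u t| ≤ B := huB t htm
          have hqt : |q t| ≤ Q := hqb t htac
          rw [hodet, hCdef]
          calc |-(q t * u (t - Δ t)) - μsq * u t|
              ≤ |q t * u (t - Δ t)| + |μsq * u t| := by
                have := abs_sub (-(q t * u (t - Δ t))) (μsq * u t)
                simpa [abs_neg] using this
            _ ≤ Q * B + μsq * B := by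
                gcongr
                · rw [abs_mul]
                  exact mul_le_mul hqt hur (abs_nonneg _) hQ
                · rw [abs_mul, abs_of_nonneg hμ]
                  exact mul_le_mul_of_nonneg_left hut hμ
            _ = (Q + μsq) * B := by ring
        have hsubw : Icc s w ⊆ Icc a c := Icc_subset_Icc hs.1 hwc
        have hCb : ∀ t ∈ Icc s w, |udd t| ≤ C := by
          intro t ht
          have hclos : t ∈ closure (Ioo s w) := by
            rw [closure_Ioo hsw.ne]; exact ht
          have hne : (nhdsWithin t (Ioo s w)).NeBot :=
            mem_closure_iff_nhdsWithin_neBot.mp hclos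
          have htc : Filter.Tendsto udd (nhdsWithin t (Ioo s w)) (nhds (udd t)) :=
            ((hcu t (hsubw ht)).mono (fun x hx => hsubw ⟨hx.1.le, hx.2.le⟩))
          exact le_of_tendsto htc.abs
            ((eventually_mem_nhdsWithin).mono fun x hx => hio x hx)
        have hsmem : s ∈ Icc s w := ⟨le_refl _, hsw.le⟩
        have hwmem : w ∈ Icc s w := ⟨hsw.le, le_refl _⟩
        have hmvt1 : ‖u w - u s‖ ≤ B * ‖w - s‖ :=
          Convex.norm_image_sub_le_of_norm_hasDerivWithin_le
            (fun x hx => (hd1 x (hsubw hx)).mono hsubw)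
            (fun x hx => by
              rw [Real.norm_eq_abs]
              exact hudB x ⟨hx.1, le_trans hx.2 hws.2⟩)
            (convex_Icc s w) hsmem hwmem
        have hmvt2 : ‖ud w - ud s‖ ≤ C * ‖w - s‖ :=
          Convex.norm_image_sub_le_of_norm_hasDerivWithin_le
            (fun x hx => (hd2 x (hsubw hx)).mono hsubw)
            (fun x hx => by rw [Real.norm_eq_abs]; exact hCb x hx)
            (convex_Icc s w) hsmem hwmem
        have hzs := hz s ⟨hs.1, le_refl s⟩
        rw [hzs.1] at hmvt1
        rw [hzs.2] at hmvt2
        have hwsle : w - s ≤ h := by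
          have : w ≤ s + h := le_trans hws.2 hms
          linarith
        have hws0 : 0 ≤ w - s := by linarith
        rw [Real.norm_eq_abs, Real.norm_eq_abs, sub_zero, abs_of_nonneg hws0]
          at hmvt1 hmvt2
        have h1 : |u w| ≤ B * h := le_trans hmvt1 (by nlinarith)
        have h2 : |ud w| ≤ C * h := le_trans hmvt2 (by nlinarith)
        have hgw : B ≤ B * h + C * h := by linarith [hBdef.le]
        have hBh : B * h + C * h = B * (h * K) := by rw [hCdef, hKdef]; ring
        rw [hBh, hhK] at hgw
        linarith
    intro t ht
    rcases le_or_gt t s with h' | h'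
    · exact hz t ⟨ht.1, h'⟩
    · have hgt := hgle t ⟨h'.le, ht.2⟩
      rw [hBzero] at hgt
      have h1 : (0:ℝ) ≤ |u t| := abs_nonneg _
      have h2 : (0:ℝ) ≤ |ud t| := abs_nonneg _
      constructor
      · exact abs_eq_zero.mp (le_antisymm (by linarith) h1)
      · exact abs_eq_zero.mp (le_antisymm (by linarith) h2)
  -- sSup argument
  set T : Set ℝ := {x | x ∈ Icc a c ∧ ∀ t ∈ Icc a x, u t = 0 ∧ ud t = 0} with hT
  have haT : a ∈ T := ⟨⟨le_refl _, hac.le⟩, fun t ht => by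
    have : t = a := le_antisymm ht.2 ht.1
    rw [this]; exact ⟨hu0, hud0⟩⟩
  have hTne : T.Nonempty := ⟨a, haT⟩
  have hTbd : BddAbove T := ⟨c, fun x hx => hx.1.2⟩
  set s₀ := sSup T with hs₀
  have has₀ : a ≤ s₀ := le_csSup hTbd haT
  have hs₀c : s₀ ≤ c := csSup_le hTne fun x hx => hx.1.2
  have hIco : ∀ t ∈ Ico a s₀, u t = 0 ∧ ud t = 0 := by
    intro t ht
    obtain ⟨x, hxT, htx⟩ := exists_lt_of_lt_csSup hTne ht.2
    exact hxT.2 t ⟨ht.1, htx.le⟩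
  have hs₀mem : u s₀ = 0 ∧ ud s₀ = 0 := by
    rcases eq_or_lt_of_le has₀ with h' | h'
    · rw [← h']; exact ⟨hu0, hud0⟩
    · have hclos : s₀ ∈ closure (Ico a s₀) := by
        rw [closure_Ico h'.ne]; exact ⟨has₀, le_refl _⟩
      have hne : (nhdsWithin s₀ (Ico a s₀)).NeBot :=
        mem_closure_iff_nhdsWithin_neBot.mp hclos
      have hsubs : Ico a s₀ ⊆ Icc a c := fun x hx => ⟨hx.1, le_trans hx.2.le hs₀c⟩
      constructor
      · have htc : Filter.Tendsto u (nhdsWithin s₀ (Ico a s₀)) (nhds (u s₀)) :=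
          (hcu1 s₀ ⟨has₀, hs₀c⟩).mono hsubs
        have htc0 : Filter.Tendsto u (nhdsWithin s₀ (Ico a s₀)) (nhds 0) := by
          apply Filter.Tendsto.congr' _ tendsto_const_nhds
          exact (eventually_mem_nhdsWithin).mono fun x hx => ((hIco x hx).1).symm
        exact tendsto_nhds_unique htc htc0
      · have htc : Filter.Tendsto ud (nhdsWithin s₀ (Ico a s₀)) (nhds (ud s₀)) :=
          (hcu2 s₀ ⟨has₀, hs₀c⟩).mono hsubs
        have htc0 : Filter.Tendsto ud (nhdsWithin s₀ (Ico a s₀)) (nhds 0) := by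
          apply Filter.Tendsto.congr' _ tendsto_const_nhds
          exact (eventually_mem_nhdsWithin).mono fun x hx => ((hIco x hx).2).symm
        exact tendsto_nhds_unique htc htc0
  have hs₀T : s₀ ∈ T := by
    refine ⟨⟨has₀, hs₀c⟩, fun t ht => ?_⟩
    rcases eq_or_lt_of_le ht.2 with h' | h'
    · rw [h']; exact hs₀mem
    · exact hIco t ⟨ht.1, h'⟩
  have hs₀eq : s₀ = c := by
    by_contra hne
    have hlt : s₀ < c := lt_of_le_of_ne hs₀c hne
    have hstep := step s₀ ⟨has₀, hlt⟩ hs₀T.2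
    have hmT : min (s₀ + h) c ∈ T := by
      refine ⟨⟨le_trans has₀ (le_of_lt (lt_min (by linarith) hlt)), min_le_right _ _⟩, hstep⟩
    have h1 : min (s₀ + h) c ≤ s₀ := le_csSup hTbd hmT
    have h2 : s₀ < min (s₀ + h) c := lt_min (by linarith) hlt
    linarith
  intro x hx
  exact hs₀T.2 x ⟨hx.1, by rw [hs₀eq]; exact hx.2⟩

theorem stmt6
    (a₁ a₁' a₂ a₂' b δ : ℝ) (hδ : δ ≠ 0) (ha₂' : a₂' ≠ 0)
    (q Δ : ℝ → ℝ)
    (hq1 : ContinuousOn q (Ico 0 (π/2))) (hq2 : ContinuousOn q (Ioc (π/2) π))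
    (hqlim1 : ∃ L : ℝ, Filter.Tendsto q (nhdsWithin (π/2) (Iio (π/2))) (nhds L))
    (hqlim2 : ∃ L : ℝ, Filter.Tendsto q (nhdsWithin (π/2) (Ioi (π/2))) (nhds L))
    (hΔ1 : ContinuousOn Δ (Ico 0 (π/2))) (hΔ2 : ContinuousOn Δ (Ioc (π/2) π))
    (hΔlim1 : ∃ L : ℝ, Filter.Tendsto Δ (nhdsWithin (π/2) (Iio (π/2))) (nhds L))
    (hΔlim2 : ∃ L : ℝ, Filter.Tendsto Δ (nhdsWithin (π/2) (Ioi (π/2))) (nhds L))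
    (hΔ0 : ∀ x, 0 ≤ Δ x)
    (hret1 : ∀ x ∈ Ico 0 (π/2), 0 ≤ x - Δ x)
    (hret2 : ∀ x ∈ Ioc (π/2) π, π/2 ≤ x - Δ x)
    (μ : ℝ) (hμ : 0 < μ)
    (hnz : (μ * a₂' + a₂, μ * a₁' + a₁) ≠ (0, 0))
    (ω₁ ω₁d ω₁dd : ℝ → ℝ)
    (hder1 : ∀ x ∈ Icc 0 (π/2), HasDerivWithinAt ω₁ (ω₁d x) (Icc 0 (π/2)) x)
    (hder2 : ∀ x ∈ Icc 0 (π/2), HasDerivWithinAt ω₁d (ω₁dd x) (Icc 0 (π/2)) x)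
    (hcont : ContinuousOn ω₁dd (Icc 0 (π/2)))
    (hode : ∀ x ∈ Icc 0 (π/2), ω₁dd x + q x * ω₁ (x - Δ x) = -μ^2 * ω₁ x)
    (hinit : ω₁ 0 = μ * a₂' + a₂)
    (hinit' : ω₁d 0 = μ * a₁' + a₁)
    (ω₂ ω₂d ω₂dd : ℝ → ℝ)
    (hder1' : ∀ x ∈ Icc (π/2) π, HasDerivWithinAt ω₂ (ω₂d x) (Icc (π/2) π) x)
    (hder2' : ∀ x ∈ Icc (π/2) π, HasDerivWithinAt ω₂d (ω₂dd x) (Icc (π/2) π) x)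
    (hcont' : ContinuousOn ω₂dd (Icc (π/2) π))
    (hode' : ∀ x ∈ Icc (π/2) π, ω₂dd x + q x * ω₂ (x - Δ x) = -μ^2 * ω₂ x)
    (hifc : ω₂ (π/2) = δ⁻¹ * ω₁ (π/2))
    (hifc' : ω₂d (π/2) = δ⁻¹ * ω₁d (π/2)) :
    (∃ y₁ y₁d y₁dd y₂ y₂d y₂dd : ℝ → ℝ,
      (∀ x ∈ Icc 0 (π/2), HasDerivWithinAt y₁ (y₁d x) (Icc 0 (π/2)) x) ∧
      (∀ x ∈ Icc 0 (π/2), HasDerivWithinAt y₁d (y₁dd x) (Icc 0 (π/2)) x) ∧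
      ContinuousOn y₁dd (Icc 0 (π/2)) ∧
      (∀ x ∈ Icc (π/2) π, HasDerivWithinAt y₂ (y₂d x) (Icc (π/2) π) x) ∧
      (∀ x ∈ Icc (π/2) π, HasDerivWithinAt y₂d (y₂dd x) (Icc (π/2) π) x) ∧
      ContinuousOn y₂dd (Icc (π/2) π) ∧
      ¬((∀ x ∈ Icc 0 (π/2), y₁ x = 0) ∧ (∀ x ∈ Icc (π/2) π, y₂ x = 0)) ∧
      (∀ x ∈ Icc 0 (π/2), y₁dd x + q x * y₁ (x - Δ x) = -μ^2 * y₁ x) ∧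
      (∀ x ∈ Icc (π/2) π, y₂dd x + q x * y₂ (x - Δ x) = -μ^2 * y₂ x) ∧
      (μ * a₁' + a₁) * y₁ 0 - (μ * a₂' + a₂) * y₁d 0 = 0 ∧
      Real.cos b * y₂ π + μ * Real.sin b * y₂d π = 0 ∧
      y₁ (π/2) = δ * y₂ (π/2) ∧
      y₁d (π/2) = δ * y₂d (π/2)) ↔
    Real.cos b * ω₂ π + μ * Real.sin b * ω₂d π = 0 := by
  have hpi2 : (0:ℝ) < π/2 := by positivity
  have hpi2pi : π/2 < π := by linarith [pi_pos]
  have h0m : (0:ℝ) ∈ Icc 0 (π/2) := ⟨le_refl _, hpi2.le⟩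
  have hpm : π/2 ∈ Icc 0 (π/2) := ⟨hpi2.le, le_refl _⟩
  have hpm2 : π/2 ∈ Icc (π/2) π := ⟨le_refl _, hpi2pi.le⟩
  have hπm : π ∈ Icc (π/2) π := ⟨hpi2pi.le, le_refl _⟩
  obtain ⟨L₁, hL₁⟩ := hqlim1
  obtain ⟨L₂, hL₂⟩ := hqlim2
  obtain ⟨Q₁, hQ₁0, hQ₁⟩ := bdd_left hpi2 hq1 hL₁
  obtain ⟨Q₂, hQ₂0, hQ₂⟩ := bdd_right hpi2pi hq2 hL₂
  have hretA : ∀ t ∈ Ioo 0 (π/2), (0:ℝ) ≤ t - Δ t ∧ t - Δ t ≤ t := by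
    intro t ht
    exact ⟨hret1 t ⟨ht.1.le, ht.2⟩, by linarith [hΔ0 t]⟩
  have hretB : ∀ t ∈ Ioo (π/2) π, π/2 ≤ t - Δ t ∧ t - Δ t ≤ t := by
    intro t ht
    exact ⟨hret2 t ⟨ht.1, ht.2.le⟩, by linarith [hΔ0 t]⟩
  constructor
  · -- forward
    rintro ⟨y₁, y₁d, y₁dd, y₂, y₂d, y₂dd, hy1, hy2, hyc, hy1', hy2', hyc', hnt,
      hodeY1, hodeY2, hbc0, hbcπ, hyifc, hyifc'⟩
    -- find the proportionality constant
    obtain ⟨cc, hc1, hc2⟩ : ∃ c : ℝ, y₁ 0 = c * (μ * a₂' + a₂) ∧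
        y₁d 0 = c * (μ * a₁' + a₁) := by
      by_cases hA : μ * a₂' + a₂ = 0
      · have hB : μ * a₁' + a₁ ≠ 0 := by
          intro hB
          exact hnz (by rw [Prod.mk.injEq]; exact ⟨hA, hB⟩)
        have hy10 : y₁ 0 = 0 := by
          rw [hA] at hbc0
          have h' : (μ * a₁' + a₁) * y₁ 0 = 0 := by linarith
          rcases mul_eq_zero.mp h' with h | h
          · exact absurd h hB
          · exact h
        exact ⟨y₁d 0 / (μ * a₁' + a₁), by rw [hA, hy10]; ring, by field_simp⟩
      · refine ⟨y₁ 0 / (μ * a₂' + a₂), by field_simp, ?_⟩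
        field_simp
        linear_combination -hbc0
    -- uniqueness on [0, π/2]
    have hU1 : ∀ x ∈ Icc 0 (π/2), y₁ x - cc * ω₁ x = 0 ∧ y₁d x - cc * ω₁d x = 0 := by
      apply uniq_zero hpi2 hQ₁0 (sq_nonneg μ) hQ₁
        (fun x hx => (hy1 x hx).sub ((hder1 x hx).const_mul cc))
        (fun x hx => (hy2 x hx).sub ((hder2 x hx).const_mul cc))
        (hyc.sub (continuousOn_const.mul hcont))
        hretA
      · intro t ht
        have htm : t ∈ Icc 0 (π/2) := ⟨ht.1.le, ht.2.le⟩
        have e1 := hodeY1 t htm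
        have e2 := hode t htm
        simp only [Pi.sub_apply]
        linear_combination e1 - cc * e2
      · simp only [Pi.sub_apply]; rw [hinit, hc1]; ring
      · rw [hinit', hc2]; ring
    -- uniqueness on [π/2, π]
    have hmid1 : y₁ (π/2) = cc * ω₁ (π/2) := by
      have := (hU1 (π/2) hpm).1; linarith
    have hmid2 : y₁d (π/2) = cc * ω₁d (π/2) := by
      have := (hU1 (π/2) hpm).2; linarith
    have hU2 : ∀ x ∈ Icc (π/2) π, y₂ x - cc * ω₂ x = 0 ∧ y₂d x - cc * ω₂d x = 0 := by
      apply uniq_zero hpi2pi hQ₂0 (sq_nonneg μ) hQ₂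
        (fun x hx => (hy1' x hx).sub ((hder1' x hx).const_mul cc))
        (fun x hx => (hy2' x hx).sub ((hder2' x hx).const_mul cc))
        (hyc'.sub (continuousOn_const.mul hcont'))
        hretB
      · intro t ht
        have htm : t ∈ Icc (π/2) π := ⟨ht.1.le, ht.2.le⟩
        have e1 := hodeY2 t htm
        have e2 := hode' t htm
        simp only [Pi.sub_apply]
        linear_combination e1 - cc * e2
      · simp only [Pi.sub_apply]; rw [hifc]
        have hy2v : y₂ (π/2) = δ⁻¹ * y₁ (π/2) := by
          rw [hyifc]; field_simp
        rw [hy2v, hmid1]; ring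
      · rw [hifc']
        have hy2v : y₂d (π/2) = δ⁻¹ * y₁d (π/2) := by
          rw [hyifc']; field_simp
        rw [hy2v, hmid2]; ring
    have hccne : cc ≠ 0 := by
      intro hcc
      apply hnt
      constructor
      · intro x hx
        have := (hU1 x hx).1
        rw [hcc] at this; linarith
      · intro x hx
        have := (hU2 x hx).1
        rw [hcc] at this; linarith
    have hv1 : y₂ π = cc * ω₂ π := by have := (hU2 π hπm).1; linarith
    have hv2 : y₂d π = cc * ω₂d π := by have := (hU2 π hπm).2; linarith
    have hkey : cc * (Real.cos b * ω₂ π + μ * Real.sin b * ω₂d π) = 0 := by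
      rw [hv1, hv2] at hbcπ; linear_combination hbcπ
    rcases mul_eq_zero.mp hkey with h | h
    · exact absurd h hccne
    · exact h
  · -- backward
    intro hF
    refine ⟨ω₁, ω₁d, ω₁dd, ω₂, ω₂d, ω₂dd, hder1, hder2, hcont, hder1', hder2', hcont',
      ?_, hode, hode', by rw [hinit, hinit']; ring, hF, by rw [hifc]; field_simp,
      by rw [hifc']; field_simp⟩
    rintro ⟨h1z, h2z⟩
    have hA0 : μ * a₂' + a₂ = 0 := by rw [← hinit]; exact h1z 0 h0m
    have hzero : HasDerivWithinAt ω₁ 0 (Icc 0 (π/2)) 0 :=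
      (hasDerivWithinAt_const 0 (Icc 0 (π/2)) 0).congr (fun x hx => h1z x hx) (h1z 0 h0m)
    have hudw : UniqueDiffWithinAt ℝ (Icc 0 (π/2)) 0 := (uniqueDiffOn_Icc hpi2) 0 h0m
    have e1 := (hder1 0 h0m).derivWithin hudw
    have e2 := hzero.derivWithin hudw
    have hB0 : μ * a₁' + a₁ = 0 := by rw [← hinit', ← e1, e2]
    exact hnz (by rw [Prod.mk.injEq]; exact ⟨hA0, hB0⟩)
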